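/- Let M = (E, 𝓘) be a matroid on a finite ground set E, let P_B(M) ⊆ ℝ^E be its base polytope, let F be a face of P_B(M) (a nonempty extreme subset of P_B(M)), and let x* ∈ F. If the affine dimension of F is d (i.e., the vector span of differences of points of F has dimension d over ℝ), then there exists a basis B of M with χ(B) ∈ F and ‖χ(B) − x*‖₁ ≤ d. -/

import Mathlib

/-- A matroid on a finite ground set `E`, given by its family of independent sets. -/
structure FinMatroid (E : Type*) [DecidableEq E] where
  Indep : Finset E → Prop
  empty_indep : Indep ∅
  subset_indep : ∀ ⦃X Y : Finset E⦄, X ⊆ Y → Indep Y → Indep X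
  exchange : ∀ ⦃X Y : Finset E⦄, Indep X → Indep Y → X.card < Y.card →
    ∃ e ∈ Y \ X, Indep (insert e X)

/-- A basis is an inclusionwise maximal independent set. -/
def FinMatroid.IsBase {E : Type*} [DecidableEq E] (M : FinMatroid E) (B : Finset E) : Prop :=
  M.Indep B ∧ ∀ ⦃X : Finset E⦄, M.Indep X → B ⊆ X → X = B

/-- The characteristic vector of a subset of the ground set. -/
def chi {E : Type*} [DecidableEq E] (S : Finset E) : E → ℝ := fun e => if e ∈ S then 1 else 0

/-- The base polytope: the convex hull of characteristic vectors of bases. -/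
def basePolytope {E : Type*} [DecidableEq E] (M : FinMatroid E) : Set (E → ℝ) :=
  convexHull ℝ {x : E → ℝ | ∃ B : Finset E, M.IsBase B ∧ x = chi B}

namespace FinMatroid

variable {E : Type*} [DecidableEq E] (M : FinMatroid E)

open Classical in
noncomputable def rk (X : Finset E) : ℕ :=
  (X.powerset.filter fun I => M.Indep I).sup Finset.card

variable {M}

open Classical in
lemma rk_spec (X : Finset E) : ∃ I, I ⊆ X ∧ M.Indep I ∧ I.card = M.rk X := by
  classical
  have hne : (X.powerset.filter fun I => M.Indep I).Nonempty :=
    ⟨∅, by simp [M.empty_indep]⟩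
  obtain ⟨I, hI, hcard⟩ := Finset.exists_mem_eq_sup _ hne Finset.card
  simp only [Finset.mem_filter, Finset.mem_powerset] at hI
  exact ⟨I, hI.1, hI.2, hcard.symm⟩

lemma le_rk {I X : Finset E} (hIX : I ⊆ X) (hI : M.Indep I) : I.card ≤ M.rk X := by
  classical
  exact Finset.le_sup (by simp [Finset.mem_filter, Finset.mem_powerset, hIX, hI])

lemma rk_mono {X Y : Finset E} (h : X ⊆ Y) : M.rk X ≤ M.rk Y := by
  obtain ⟨I, hIX, hI, hc⟩ := rk_spec (M := M) X
  exact hc ▸ le_rk (hIX.trans h) hI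

lemma rk_le_card (X : Finset E) : M.rk X ≤ X.card := by
  obtain ⟨I, hIX, _, hc⟩ := rk_spec (M := M) X
  exact hc ▸ Finset.card_le_card hIX

lemma rk_indep {X : Finset E} (hX : M.Indep X) : M.rk X = X.card :=
  le_antisymm (rk_le_card X) (le_rk le_rfl hX)

lemma indep_of_rk_eq_card {X : Finset E} (h : M.rk X = X.card) : M.Indep X := by
  obtain ⟨I, hIX, hI, hc⟩ := rk_spec (M := M) X
  have : I = X := Finset.eq_of_subset_of_card_le hIX (by omega)
  exact this ▸ hI

lemma rk_insert_le (a : E) (X : Finset E) : M.rk (insert a X) ≤ M.rk X + 1 := by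
  obtain ⟨J, hJX, hJ, hc⟩ := rk_spec (M := M) (insert a X)
  have h1 : J.erase a ⊆ X := by
    intro g hg
    have := hJX (Finset.mem_of_mem_erase hg)
    rcases Finset.mem_insert.1 this with h | h
    · exact absurd h (Finset.ne_of_mem_erase hg)
    · exact h
  have h2 : (J.erase a).card ≤ M.rk X := le_rk h1 (M.subset_indep (Finset.erase_subset _ _) hJ)
  have h3 : J.card ≤ (J.erase a).card + 1 := by
    by_cases ha : a ∈ J
    · rw [Finset.card_erase_of_mem ha]; omega
    · rw [Finset.erase_eq_of_notMem ha]; omega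
  omega

lemma rk_extend {I X : Finset E} (hI : M.Indep I) (hIX : I ⊆ X) :
    ∃ J, I ⊆ J ∧ J ⊆ X ∧ M.Indep J ∧ J.card = M.rk X := by
  have key : ∀ n (I : Finset E), M.Indep I → I ⊆ X → M.rk X - I.card = n →
      ∃ J, I ⊆ J ∧ J ⊆ X ∧ M.Indep J ∧ J.card = M.rk X := by
    intro n
    induction n with
    | zero =>
      intro I hI hIX h0
      have := le_rk hIX hI
      exact ⟨I, le_rfl, hIX, hI, by omega⟩
    | succ n ih =>
      intro I hI hIX hn
      have hlt : I.card < M.rk X := by omega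
      obtain ⟨I', hI'X, hI', hc'⟩ := rk_spec (M := M) X
      obtain ⟨e, he, hins⟩ := M.exchange hI hI' (by omega)
      have heI : e ∉ I := (Finset.mem_sdiff.1 he).2
      have hsub : insert e I ⊆ X := Finset.insert_subset (hI'X (Finset.mem_sdiff.1 he).1) hIX
      obtain ⟨J, hJ1, hJ2, hJ3, hJ4⟩ := ih (insert e I) hins hsub
        (by rw [Finset.card_insert_of_notMem heI]; omega)
      exact ⟨J, (Finset.subset_insert _ _).trans hJ1, hJ2, hJ3, hJ4⟩
  exact key _ I hI hIX rfl

lemma rk_submod (X Y : Finset E) :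
    M.rk (X ∪ Y) + M.rk (X ∩ Y) ≤ M.rk X + M.rk Y := by
  obtain ⟨I, hIXY, hI, hIc⟩ := rk_spec (M := M) (X ∩ Y)
  obtain ⟨J, hIJ, hJXY, hJ, hJc⟩ := rk_extend hI (hIXY.trans Finset.inter_subset_union)
  have h1 : (J ∩ X).card ≤ M.rk X := le_rk Finset.inter_subset_right
    (M.subset_indep Finset.inter_subset_left hJ)
  have h2 : (J ∩ Y).card ≤ M.rk Y := le_rk Finset.inter_subset_right
    (M.subset_indep Finset.inter_subset_left hJ)
  have h3 : (J ∩ X) ∪ (J ∩ Y) = J := by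
    rw [← Finset.inter_union_distrib_left]
    exact Finset.inter_eq_left.2 hJXY
  have h4 : I ⊆ (J ∩ X) ∩ (J ∩ Y) := by
    intro g hg
    have := hIXY hg
    simp only [Finset.mem_inter] at this ⊢
    exact ⟨⟨hIJ hg, this.1⟩, hIJ hg, this.2⟩
  have h5 := Finset.card_union_add_card_inter (J ∩ X) (J ∩ Y)
  have h6 : I.card ≤ ((J ∩ X) ∩ (J ∩ Y)).card := Finset.card_le_card h4
  rw [h3] at h5
  omega

lemma rk_union_eq_of_forall_insert {X Z : Finset E}
    (h : ∀ y ∈ Z, M.rk (insert y X) = M.rk X) : M.rk (X ∪ Z) = M.rk X := by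
  refine le_antisymm ?_ (rk_mono Finset.subset_union_left)
  by_contra hlt
  push_neg at hlt
  obtain ⟨I, hIX, hI, hIc⟩ := rk_spec (M := M) X
  obtain ⟨J, hJXZ, hJ, hJc⟩ := rk_spec (M := M) (X ∪ Z)
  obtain ⟨z, hz, hins⟩ := M.exchange hI hJ (by omega)
  have hzI : z ∉ I := (Finset.mem_sdiff.1 hz).2
  have hcard : (insert z I).card = M.rk X + 1 := by
    rw [Finset.card_insert_of_notMem hzI]; omega
  rcases Finset.mem_union.1 (hJXZ (Finset.mem_sdiff.1 hz).1) with hzX | hzZ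
  · have : (insert z I).card ≤ M.rk X := le_rk (Finset.insert_subset hzX hIX) hins
    omega
  · have : (insert z I).card ≤ M.rk (insert z X) :=
      le_rk (Finset.insert_subset_insert _ hIX) hins
    rw [h z hzZ] at this
    omega

lemma indep_card_le_base {B I : Finset E} (hB : M.IsBase B) (hI : M.Indep I) :
    I.card ≤ B.card := by
  by_contra h
  push_neg at h
  obtain ⟨e, he, hins⟩ := M.exchange hB.1 hI h
  have := hB.2 hins (Finset.subset_insert _ _)
  exact (Finset.mem_sdiff.1 he).2 (this ▸ Finset.mem_insert_self e B)

lemma base_card_eq {B B' : Finset E} (hB : M.IsBase B) (hB' : M.IsBase B') :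
    B.card = B'.card :=
  le_antisymm (indep_card_le_base hB' hB.1) (indep_card_le_base hB hB'.1)

lemma base_of_indep_card {B I : Finset E} (hB : M.IsBase B) (hI : M.Indep I)
    (hc : I.card = B.card) : M.IsBase I := by
  refine ⟨hI, fun X hX hsub => ?_⟩
  have := indep_card_le_base hB hX
  exact Finset.eq_of_subset_of_card_le hsub (by omega) |>.symm

end FinMatroid

namespace FinMatroid

variable {E : Type*} [DecidableEq E] {M : FinMatroid E}

theorem sym_exchange {B₁ B₂ : Finset E} (hB₁ : M.IsBase B₁) (hB₂ : M.IsBase B₂)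
    {e : E} (he₁ : e ∈ B₁) (he₂ : e ∉ B₂) :
    ∃ f ∈ B₂, f ∉ B₁ ∧ M.IsBase (insert f (B₁.erase e)) ∧
      M.IsBase (insert e (B₂.erase f)) := by
  classical
  set r := B₁.card with hr
  have hr₂ : B₂.card = r := base_card_eq hB₂ hB₁
  -- the set insert e B₂ is dependent
  have hdep : ¬ M.Indep (insert e B₂) := by
    intro h
    have := hB₂.2 h (Finset.subset_insert _ _)
    exact he₂ (this ▸ Finset.mem_insert_self e B₂)
  -- choose a minimum-cardinality dependent subset D of insert e B₂
  have hne : ((insert e B₂).powerset.filter fun A => ¬ M.Indep A).Nonempty :=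
    ⟨insert e B₂, by simp [hdep]⟩
  obtain ⟨D, hDmem, hDmin⟩ := Finset.exists_min_image _ Finset.card hne
  simp only [Finset.mem_filter, Finset.mem_powerset] at hDmem
  obtain ⟨hDsub, hDdep⟩ := hDmem
  have hmin : ∀ A ⊆ insert e B₂, ¬ M.Indep A → D.card ≤ A.card := by
    intro A hA hAd
    exact hDmin A (by simp [Finset.mem_filter, Finset.mem_powerset, hA, hAd])
  -- every proper one-element deletion of D is independent
  have hDer : ∀ f ∈ D, M.Indep (D.erase f) := by
    intro f hf
    by_contra hcon
    have := hmin (D.erase f) ((Finset.erase_subset _ _).trans hDsub) hcon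
    have := Finset.card_erase_of_mem hf
    have : 1 ≤ D.card := Finset.card_pos.2 ⟨f, hf⟩
    omega
  have heD : e ∈ D := by
    by_contra hcon
    refine hDdep (M.subset_indep ?_ hB₂.1)
    intro g hg
    rcases Finset.mem_insert.1 (hDsub hg) with h | h
    · exact absurd (h ▸ hg) hcon
    · exact h
  have hDcard : 1 ≤ D.card := Finset.card_pos.2 ⟨e, heD⟩
  have hrkD : M.rk D = D.card - 1 := by
    have hub : M.rk D ≠ D.card := fun h => hDdep (indep_of_rk_eq_card h)
    have hub2 : M.rk D ≤ D.card := rk_le_card D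
    have hlb : D.card - 1 ≤ M.rk D := by
      have := le_rk (M := M) (Finset.erase_subset e D) (hDer e heD)
      rw [Finset.card_erase_of_mem heD] at this
      omega
    omega
  -- Step A : for every f ∈ D with f ≠ e, the set insert e (B₂.erase f) is independent
  have stepA : ∀ f ∈ D, f ≠ e → M.Indep (insert e (B₂.erase f)) := by
    intro f hfD hfe
    have hfB₂ : f ∈ B₂ := by
      rcases Finset.mem_insert.1 (hDsub hfD) with h | h
      · exact absurd h hfe
      · exact h
    set X := insert e (B₂.erase f) with hX
    by_contra hcon
    have hrB : 1 ≤ B₂.card := Finset.card_pos.2 ⟨f, hfB₂⟩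
    have hr1 : 1 ≤ r := Finset.card_pos.2 ⟨e, he₁⟩
    have hXcard : X.card = r := by
      rw [hX, Finset.card_insert_of_notMem (fun h => he₂ (Finset.mem_of_mem_erase h)),
        Finset.card_erase_of_mem hfB₂]
      omega
    have hrkX : M.rk X ≤ r - 1 := by
      have h1 : M.rk X ≠ X.card := fun h => hcon (indep_of_rk_eq_card h)
      have h2 : M.rk X ≤ X.card := rk_le_card X
      omega
    have hunion : X ∪ D = insert e B₂ := by
      apply Finset.Subset.antisymm
      · refine Finset.union_subset ?_ hDsub
        intro g hg
        rcases Finset.mem_insert.1 hg with h | h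
        · exact h ▸ Finset.mem_insert_self _ _
        · exact Finset.mem_insert_of_mem (Finset.mem_of_mem_erase h)
      · intro g hg
        rcases Finset.mem_insert.1 hg with h | h
        · exact Finset.mem_union_left _ (h ▸ Finset.mem_insert_self _ _)
        · by_cases hgf : g = f
          · exact Finset.mem_union_right _ (hgf ▸ hfD)
          · exact Finset.mem_union_left _
              (Finset.mem_insert_of_mem (Finset.mem_erase.2 ⟨hgf, h⟩))
    have hinter : X ∩ D = D.erase f := by
      apply Finset.Subset.antisymm
      · intro g hg
        obtain ⟨hgX, hgD⟩ := Finset.mem_inter.1 hg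
        refine Finset.mem_erase.2 ⟨?_, hgD⟩
        intro hgf
        subst hgf
        rcases Finset.mem_insert.1 hgX with h | h
        · exact hfe h
        · exact (Finset.mem_erase.1 h).1 rfl
      · intro g hg
        obtain ⟨hgf, hgD⟩ := Finset.mem_erase.1 hg
        refine Finset.mem_inter.2 ⟨?_, hgD⟩
        rcases Finset.mem_insert.1 (hDsub hgD) with h | h
        · exact h ▸ Finset.mem_insert_self _ _
        · exact Finset.mem_insert_of_mem (Finset.mem_erase.2 ⟨hgf, h⟩)
    have hsub := rk_submod (M := M) X D
    rw [hunion, hinter] at hsub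
    have h5 : M.rk (insert e B₂) ≥ r := by
      have := rk_mono (M := M) (Finset.subset_insert e B₂)
      rw [rk_indep hB₂.1] at this
      omega
    have h6 : M.rk (D.erase f) = D.card - 1 := by
      rw [rk_indep (hDer f hfD), Finset.card_erase_of_mem hfD]
    omega
  -- Step B : find f ∈ D, f ≠ e, f ∉ B₁ with insert f (B₁.erase e) independent
  have stepB : ∃ f ∈ D, f ≠ e ∧ f ∉ B₁ ∧ M.Indep (insert f (B₁.erase e)) := by
    by_contra hcon
    push_neg at hcon
    set H := B₁.erase e with hH
    have heH : e ∉ H := Finset.notMem_erase e B₁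
    have hHcard : H.card = r - 1 := by rw [hH, Finset.card_erase_of_mem he₁]
    have hHindep : M.Indep H := M.subset_indep (Finset.erase_subset _ _) hB₁.1
    have hrkH : M.rk H = r - 1 := by rw [rk_indep hHindep, hHcard]
    have hall : ∀ f ∈ D.erase e, M.rk (insert f H) = M.rk H := by
      intro f hf
      obtain ⟨hfe, hfD⟩ := Finset.mem_erase.1 hf
      by_cases hfB₁ : f ∈ B₁
      · have : f ∈ H := Finset.mem_erase.2 ⟨hfe, hfB₁⟩
        rw [Finset.insert_eq_self.2 this]
      · have hdepf := hcon f hfD hfe hfB₁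
        have hfH : f ∉ H := fun h => hfB₁ (Finset.mem_of_mem_erase h)
        have hcardf : (insert f H).card = r := by
          rw [Finset.card_insert_of_notMem hfH, hHcard]
          have : 1 ≤ r := Finset.card_pos.2 ⟨e, he₁⟩
          omega
        have h1 : M.rk (insert f H) ≠ (insert f H).card :=
          fun h => hdepf (indep_of_rk_eq_card h)
        have h2 : M.rk (insert f H) ≤ (insert f H).card := rk_le_card _
        have h3 : M.rk H ≤ M.rk (insert f H) := rk_mono (Finset.subset_insert _ _)
        omega
    have hrkHD : M.rk (H ∪ D.erase e) = r - 1 := by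
      rw [rk_union_eq_of_forall_insert hall, hrkH]
    have hsub := rk_submod (M := M) (H ∪ D.erase e) D
    have hinter : (H ∪ D.erase e) ∩ D = D.erase e := by
      apply Finset.Subset.antisymm
      · intro g hg
        obtain ⟨hg1, hg2⟩ := Finset.mem_inter.1 hg
        rcases Finset.mem_union.1 hg1 with h | h
        · exact Finset.mem_erase.2 ⟨Finset.ne_of_mem_erase h, hg2⟩
        · exact h
      · intro g hg
        exact Finset.mem_inter.2 ⟨Finset.mem_union_right _ hg, Finset.mem_of_mem_erase hg⟩
    have hBsub : B₁ ⊆ (H ∪ D.erase e) ∪ D := by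
      intro g hg
      by_cases hge : g = e
      · exact Finset.mem_union_right _ (hge ▸ heD)
      · exact Finset.mem_union_left _ (Finset.mem_union_left _ (Finset.mem_erase.2 ⟨hge, hg⟩))
    have hrV : r ≤ M.rk ((H ∪ D.erase e) ∪ D) := by
      have := rk_mono (M := M) hBsub
      rw [rk_indep hB₁.1] at this
      omega
    have h6 : M.rk (D.erase e) = D.card - 1 := by
      rw [rk_indep (hDer e heD), Finset.card_erase_of_mem heD]
    rw [hinter, h6, hrkD, hrkHD] at hsub
    have hr1 : 1 ≤ r := Finset.card_pos.2 ⟨e, he₁⟩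
    omega
  obtain ⟨f, hfD, hfe, hfB₁, hindep1⟩ := stepB
  have hfB₂ : f ∈ B₂ := by
    rcases Finset.mem_insert.1 (hDsub hfD) with h | h
    · exact absurd h hfe
    · exact h
  have hr1 : 1 ≤ r := Finset.card_pos.2 ⟨e, he₁⟩
  have hcard1 : (insert f (B₁.erase e)).card = r := by
    rw [Finset.card_insert_of_notMem (fun h => hfB₁ (Finset.mem_of_mem_erase h)),
      Finset.card_erase_of_mem he₁]
    omega
  have hindep2 := stepA f hfD hfe
  have hcard2 : (insert e (B₂.erase f)).card = r := by
    rw [Finset.card_insert_of_notMem (fun h => he₂ (Finset.mem_of_mem_erase h)),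
      Finset.card_erase_of_mem hfB₂]
    omega
  exact ⟨f, hfB₂, hfB₁, base_of_indep_card hB₁ hindep1 hcard1,
    base_of_indep_card hB₁ hindep2 hcard2⟩

end FinMatroid

section AuxGeom

variable {E : Type*} [DecidableEq E]

/-- Absorb positive convex combinations into an extreme subset. -/
lemma extreme_absorb {V : Type*} [AddCommGroup V] [Module ℝ V] {A F : Set V}
    (hA : Convex ℝ A) (hF : IsExtreme ℝ A F) {ι : Type*} (t : Finset ι) :
    ∀ (w : ι → ℝ) (z : ι → V), (∀ i ∈ t, 0 < w i) → (∀ i ∈ t, z i ∈ A) →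
      t.centerMass w z ∈ F → ∀ i ∈ t, z i ∈ F := by
  classical
  induction t using Finset.induction_on with
  | empty => intro w z _ _ _ i hi; exact absurd hi (Finset.notMem_empty i)
  | @insert a s ha ih =>
    intro w z hw hz hmem i hi
    by_cases hsne : s.Nonempty
    · have hWpos : 0 < ∑ j ∈ s, w j :=
        Finset.sum_pos (fun j hj => hw j (Finset.mem_insert_of_mem hj)) hsne
      have hTpos : 0 < w a + ∑ j ∈ s, w j :=
        add_pos (hw a (Finset.mem_insert_self a s)) hWpos
      rw [Finset.centerMass_insert _ _ _ ha (ne_of_gt hWpos)] at hmem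
      set y := s.centerMass w z with hy
      have hyA : y ∈ A := by
        have := Finset.centerMass_mem_convexHull s
          (fun j hj => (hw j (Finset.mem_insert_of_mem hj)).le) hWpos
          (fun j hj => hz j (Finset.mem_insert_of_mem hj))
        rwa [hA.convexHull_eq] at this
      have hseg : (w a / (w a + ∑ j ∈ s, w j)) • z a +
          ((∑ j ∈ s, w j) / (w a + ∑ j ∈ s, w j)) • y ∈ openSegment ℝ (z a) y := by
        refine ⟨_, _, div_pos (hw a (Finset.mem_insert_self a s)) hTpos,
          div_pos hWpos hTpos, ?_, rfl⟩
        field_simp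
      have hres := hF.2 (hz a (Finset.mem_insert_self a s)) hyA hmem hseg
      rcases Finset.mem_insert.1 hi with h | h
      · exact h ▸ hres
      · exact ih w z (fun j hj => hw j (Finset.mem_insert_of_mem hj))
          (fun j hj => hz j (Finset.mem_insert_of_mem hj)) (hF.right_mem_of_mem_openSegment (hz a (Finset.mem_insert_self a s)) hyA hmem hseg) i h
    · rw [Finset.not_nonempty_iff_eq_empty] at hsne
      subst hsne
      rcases Finset.mem_insert.1 hi with h | h
      · subst h
        rw [show (insert i ∅ : Finset ι) = {i} by rfl] at hmem
        rwa [Finset.centerMass_singleton _ _ (ne_of_gt (hw i (Finset.mem_insert_self i ∅)))]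
          at hmem
      · exact absurd h (Finset.notMem_empty i)

/-- The elementary exchange vector. -/
def delta (i j : E) : E → ℝ := fun g => (if g = i then (1 : ℝ) else 0) - (if g = j then 1 else 0)

lemma delta_symm (i j : E) : delta j i = -delta i j := by
  funext g; simp only [delta, Pi.neg_apply]; ring

lemma delta_trans (i j k : E) : delta i k = delta i j + delta j k := by
  funext g; simp only [delta, Pi.add_apply]; ring

lemma chi_sub_exchange {B : Finset E} {e f : E} (he : e ∈ B) (hf : f ∉ B) :
    chi B - chi (insert f (B.erase e)) = delta e f := by
  have hef : e ≠ f := fun h => hf (h ▸ he)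
  funext g
  by_cases hge : g = e
  · subst hge
    simp [chi, delta, he, hef, Finset.mem_insert, Finset.mem_erase]
  · by_cases hgf : g = f
    · subst hgf
      simp [chi, delta, hf, hge, Finset.mem_insert, Finset.mem_erase]
    · simp only [chi, delta, Pi.sub_apply, Finset.mem_insert, Finset.mem_erase, hge, hgf]
      simp [hge, hgf]

lemma chi_add_exchange {B B' : Finset E} {e f : E} (he : e ∈ B) (he' : e ∉ B')
    (hf : f ∈ B') (hf' : f ∉ B) :
    chi B + chi B' = chi (insert f (B.erase e)) + chi (insert e (B'.erase f)) := by
  have hef : e ≠ f := fun h => he' (h ▸ hf)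
  funext g
  by_cases hge : g = e
  · subst hge
    simp [chi, he, he', hef, Finset.mem_insert, Finset.mem_erase]
  · by_cases hgf : g = f
    · subst hgf
      simp [chi, hf, hf', hef, Ne.symm hef, Finset.mem_insert, Finset.mem_erase, hge]
    · simp only [chi, Pi.add_apply, Finset.mem_insert, Finset.mem_erase, hge, hgf]
      simp [hge, hgf]

end AuxGeom

section Rel

variable {E : Type*} [DecidableEq E] [Fintype E] (F : Set (E → ℝ))

/-- Two coordinates are related if their elementary exchange vector lies in the
direction space of `F` (or they are equal). -/
def exRel (i j : E) : Prop := i = j ∨ (i ≠ j ∧ delta i j ∈ vectorSpan ℝ F)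

lemma exRel_refl (i : E) : exRel F i i := Or.inl rfl

lemma exRel_symm {i j : E} (h : exRel F i j) : exRel F j i := by
  rcases h with h | ⟨hne, hmem⟩
  · exact Or.inl h.symm
  · exact Or.inr ⟨hne.symm, by rw [delta_symm]; exact neg_mem hmem⟩

lemma exRel_trans {i j k : E} (hij : exRel F i j) (hjk : exRel F j k) : exRel F i k := by
  rcases hij with rfl | ⟨hne1, h1⟩
  · exact hjk
  rcases hjk with rfl | ⟨hne2, h2⟩
  · exact Or.inr ⟨hne1, h1⟩
  by_cases hik : i = k
  · exact Or.inl hik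
  · exact Or.inr ⟨hik, by rw [delta_trans i j k]; exact add_mem h1 h2⟩

/-- The setoid generated by `exRel`. -/
def exSetoid : Setoid E :=
  ⟨exRel F, ⟨fun i => exRel_refl F i, fun h => exRel_symm F h, fun h h' => exRel_trans F h h'⟩⟩

/-- A choice of representative of each `exRel`-class. -/
noncomputable def exRep (i : E) : E := (Quotient.mk (exSetoid F) i).out

lemma exRel_rep (i : E) : exRel F (exRep F i) i := @Quotient.mk_out E (exSetoid F) i

lemma exRep_eq_of_rel {i j : E} (h : exRel F i j) : exRep F i = exRep F j := by
  unfold exRep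
  congr 1
  exact Quotient.sound h

lemma exRep_rep (i : E) : exRep F (exRep F i) = exRep F i :=
  exRep_eq_of_rel F (exRel_rep F i)

/-- The number of non-representative coordinates is at most the dimension of `F`. -/
lemma card_nonrep_le :
    ((Finset.univ : Finset E).filter fun i => exRep F i ≠ i).card ≤
      Module.finrank ℝ (vectorSpan ℝ F) := by
  classical
  set W := vectorSpan ℝ F with hW
  have hmem : ∀ i : {i : E // exRep F i ≠ i}, delta (i : E) (exRep F i) ∈ W := by
    intro i
    rcases exRel_symm F (exRel_rep F i.1) with h | ⟨_, hm⟩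
    · exact absurd h.symm i.2
    · exact hm
  set v : {i : E // exRep F i ≠ i} → W := fun i => ⟨delta i.1 (exRep F i.1), hmem i⟩ with hv
  have hli : LinearIndependent ℝ v := by
    apply LinearIndependent.of_comp W.subtype
    rw [Fintype.linearIndependent_iff]
    intro c hc j
    have heval := congrFun hc j.1
    rw [Finset.sum_apply] at heval
    simp only [Function.comp_apply, Pi.smul_apply, smul_eq_mul] at heval
    have hterm : ∀ i : {i : E // exRep F i ≠ i},
        c i * ((W.subtype (v i)) j.1) = if i = j then c i else 0 := by
      intro i
      have : (W.subtype (v i)) j.1 = delta i.1 (exRep F i.1) j.1 := rfl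
      rw [this]
      by_cases hij : i = j
      · rw [if_pos hij, hij]
        have h2 : j.1 ≠ exRep F j.1 := fun h => j.2 h.symm
        simp [delta, h2]
      · have h1 : j.1 ≠ i.1 := fun h => hij (Subtype.ext h.symm)
        have h2 : j.1 ≠ exRep F i.1 := by
          intro h
          apply j.2
          rw [h, exRep_rep F i.1, ← h]
        simp [delta, Ne.symm h1, h1, h2, hij]
    calc c j = ∑ i : {i : E // exRep F i ≠ i}, if i = j then c i else 0 := by
          rw [Finset.sum_ite_eq' Finset.univ j (fun i => c i)]; simp
      _ = ∑ i : {i : E // exRep F i ≠ i}, c i * ((W.subtype (v i)) j.1) := by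
          exact Finset.sum_congr rfl (fun i _ => (hterm i).symm)
      _ = (0 : E → ℝ) j.1 := heval
      _ = 0 := rfl
  have hcard := hli.fintype_card_le_finrank
  rwa [Fintype.card_subtype] at hcard

end Rel

section Decomp

variable {E : Type*} [DecidableEq E] [Fintype E] {M : FinMatroid E} {F : Set (E → ℝ)}

/-- The span of exchange directions between distinct related coordinates. -/
noncomputable def dSpan (F : Set (E → ℝ)) : Submodule ℝ (E → ℝ) :=
  Submodule.span ℝ {y : E → ℝ | ∃ i j : E, i ≠ j ∧ delta i j ∈ vectorSpan ℝ F ∧ y = delta i j}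

lemma vert_exchange (hFconv : Convex ℝ F) (hFface : IsExtreme ℝ (basePolytope M) F)
    {B B' : Finset E} (hB : M.IsBase B) (hBF : chi B ∈ F) (hB' : M.IsBase B')
    (hB'F : chi B' ∈ F) {e : E} (he : e ∈ B) (he' : e ∉ B') :
    ∃ f, f ∈ B' ∧ f ∉ B ∧ M.IsBase (insert f (B.erase e)) ∧
      chi (insert f (B.erase e)) ∈ F := by
  obtain ⟨f, hfB', hfB, hbase1, hbase2⟩ := FinMatroid.sym_exchange hB hB' he he'
  set B₁ := insert f (B.erase e) with hB₁
  set B₂ := insert e (B'.erase f) with hB₂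
  have hiden : chi B + chi B' = chi B₁ + chi B₂ := chi_add_exchange he he' hfB' hfB
  have hmid : (1/2 : ℝ) • chi B + (1/2 : ℝ) • chi B' ∈ F :=
    hFconv hBF hB'F (by norm_num) (by norm_num) (by norm_num)
  have hEq : (1/2 : ℝ) • chi B + (1/2 : ℝ) • chi B'
      = (1/2 : ℝ) • chi B₁ + (1/2 : ℝ) • chi B₂ := by
    rw [← smul_add, ← smul_add, hiden]
  rw [hEq] at hmid
  by_cases heq : chi B₁ = chi B₂
  · have : (1/2 : ℝ) • chi B₁ + (1/2 : ℝ) • chi B₂ = chi B₁ := by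
      rw [heq, ← add_smul]; norm_num
    exact ⟨f, hfB', hfB, hbase1, this ▸ hmid⟩
  · have hseg : (1/2 : ℝ) • chi B₁ + (1/2 : ℝ) • chi B₂ ∈
        openSegment ℝ (chi B₁) (chi B₂) :=
      ⟨1/2, 1/2, by norm_num, by norm_num, by norm_num, rfl⟩
    have h1P : chi B₁ ∈ basePolytope M :=
      subset_convexHull ℝ _ ⟨B₁, hbase1, rfl⟩
    have h2P : chi B₂ ∈ basePolytope M :=
      subset_convexHull ℝ _ ⟨B₂, hbase2, rfl⟩
    exact ⟨f, hfB', hfB, hbase1, (hFface.2 h1P h2P hmid hseg)⟩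

lemma diff_mem_dSpan (hFconv : Convex ℝ F) (hFface : IsExtreme ℝ (basePolytope M) F) :
    ∀ (n : ℕ) (B B' : Finset E), M.IsBase B → chi B ∈ F → M.IsBase B' → chi B' ∈ F →
      (B \ B').card = n → chi B - chi B' ∈ dSpan F := by
  intro n
  induction n with
  | zero =>
    intro B B' hB hBF hB' hB'F h0
    have hsub : B ⊆ B' := by
      rw [← Finset.sdiff_eq_empty_iff_subset]
      exact Finset.card_eq_zero.1 h0
    have hBB : B = B' := Finset.eq_of_subset_of_card_le hsub
      (le_of_eq (FinMatroid.base_card_eq hB' hB))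
    rw [hBB, sub_self]
    exact zero_mem _
  | succ n ih =>
    intro B B' hB hBF hB' hB'F hn
    have hne : (B \ B').Nonempty := Finset.card_pos.1 (by omega)
    obtain ⟨e, he⟩ := hne
    have heB : e ∈ B := (Finset.mem_sdiff.1 he).1
    have heB' : e ∉ B' := (Finset.mem_sdiff.1 he).2
    obtain ⟨f, hfB', hfB, hbase1, hB₁F⟩ :=
      vert_exchange hFconv hFface hB hBF hB' hB'F heB heB'
    set B₁ := insert f (B.erase e) with hB₁
    have hd1 : chi B - chi B₁ = delta e f := chi_sub_exchange heB hfB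
    have hef : e ≠ f := fun h => heB' (h ▸ hfB')
    have hmem1 : delta e f ∈ vectorSpan ℝ F := by
      rw [← hd1]
      have := vsub_mem_vectorSpan ℝ hBF hB₁F
      rwa [vsub_eq_sub] at this
    have hgen : chi B - chi B₁ ∈ dSpan F :=
      Submodule.subset_span ⟨e, f, hef, hmem1, hd1⟩
    have hsdiff : B₁ \ B' = (B \ B').erase e := by
      ext g
      simp only [hB₁, Finset.mem_sdiff, Finset.mem_insert, Finset.mem_erase]
      constructor
      · rintro ⟨h | ⟨hge, hgB⟩, hgB'⟩
        · exact absurd (h ▸ hfB') hgB'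
        · exact ⟨hge, hgB, hgB'⟩
      · rintro ⟨hge, hgB, hgB'⟩
        exact ⟨Or.inr ⟨hge, hgB⟩, hgB'⟩
    have hcard : (B₁ \ B').card = n := by
      rw [hsdiff, Finset.card_erase_of_mem he, hn]
      omega
    have hrec := ih B₁ B' hbase1 hB₁F hB' hB'F hcard
    have hsplit : chi B - chi B' = (chi B - chi B₁) + (chi B₁ - chi B') :=
      (sub_add_sub_cancel _ _ _).symm
    rw [hsplit]
    exact add_mem hgen hrec

end Decomp

lemma sum_chi {E : Type*} [DecidableEq E] [Fintype E] (B : Finset E) :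
    ∑ e, chi B e = (B.card : ℝ) := by
  unfold chi
  rw [Finset.sum_ite_mem, Finset.univ_inter, Finset.sum_const, nsmul_eq_mul, mul_one]

/-- If `x*` lies on a face `F` of the base polytope of affine dimension `d`,
then there is a basis `B` with `χ(B) ∈ F` and `‖χ(B) − x*‖₁ ≤ d`. -/
theorem basis_close_to_point_on_face {E : Type*} [DecidableEq E] [Fintype E]
    (M : FinMatroid E) (F : Set (E → ℝ))
    (hFne : F.Nonempty) (hFconv : Convex ℝ F)
    (hFface : IsExtreme ℝ (basePolytope M) F)
    (x : E → ℝ) (hx : x ∈ F)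
    (d : ℕ) (hd : Module.finrank ℝ (vectorSpan ℝ F) = d) :
    ∃ B : Finset E, M.IsBase B ∧ chi B ∈ F ∧ ∑ e, |chi B e - x e| ≤ (d : ℝ) := by
  classical
  have hPconv : Convex ℝ (basePolytope M) := convex_convexHull ℝ _
  have hxP : x ∈ basePolytope M := hFface.1 hx
  have hxP' := hxP
  rw [basePolytope, convexHull_eq] at hxP'
  obtain ⟨ι, t, w, z, hw0, hw1, hzS, hcm⟩ := hxP'
  set t' := t.filter (fun i => w i ≠ 0) with ht'
  have hcm' : t'.centerMass w z = x := by
    rw [ht', Finset.centerMass_filter_ne_zero]; exact hcm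
  have hw1' : ∑ i ∈ t', w i = 1 := by
    rw [ht', Finset.sum_filter_ne_zero]; exact hw1
  have hw0' : ∀ i ∈ t', 0 < w i := fun i hi =>
    lt_of_le_of_ne (hw0 i (Finset.filter_subset _ _ hi))
      (Ne.symm (Finset.mem_filter.1 hi).2)
  have hzS' : ∀ i ∈ t', ∃ B : Finset E, M.IsBase B ∧ z i = chi B := fun i hi =>
    hzS i (Finset.filter_subset _ _ hi)
  have hzP : ∀ i ∈ t', z i ∈ basePolytope M := fun i hi =>
    subset_convexHull ℝ _ (hzS' i hi)
  have habs : ∀ i ∈ t', z i ∈ F :=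
    extreme_absorb hPconv hFface t' w z hw0' hzP (by rw [hcm']; exact hx)
  have ht'ne : t'.Nonempty := by
    rcases Finset.eq_empty_or_nonempty t' with h | h
    · rw [h, Finset.sum_empty] at hw1'; norm_num at hw1'
    · exact h
  obtain ⟨i₀, hi₀⟩ := ht'ne
  obtain ⟨B₀, hB₀, hz₀⟩ := hzS' i₀ hi₀
  set rr : ℝ := (B₀.card : ℝ) with hrr
  -- bounds and coordinate sum for every point of the polytope
  have hPsub : basePolytope M ⊆
      {y : E → ℝ | (∀ e, 0 ≤ y e ∧ y e ≤ 1) ∧ ∑ e, y e = rr} := by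
    rw [basePolytope]
    apply convexHull_min
    · rintro y ⟨B, hB, rfl⟩
      refine ⟨fun e => ?_, ?_⟩
      · by_cases h : e ∈ B <;> simp [chi, h]
      · rw [sum_chi, hrr]
        exact_mod_cast congrArg Nat.cast (FinMatroid.base_card_eq hB hB₀)
    · intro u hu v hv a b ha hb hab
      refine ⟨fun e => ?_, ?_⟩
      · have h1 := (hu.1 e).1
        have h2 := (hu.1 e).2
        have h3 := (hv.1 e).1
        have h4 := (hv.1 e).2
        have h5 : (a • u + b • v) e = a * u e + b * v e := rfl
        rw [h5]
        constructor
        · nlinarith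
        · nlinarith
      · have h5 : ∑ e, (a • u + b • v) e = a * (∑ e, u e) + b * (∑ e, v e) := by
          rw [Finset.mul_sum, Finset.mul_sum, ← Finset.sum_add_distrib]
          rfl
        rw [h5, hu.2, hv.2, ← add_mul, hab, one_mul]
  have hxbound := hPsub hxP
  have hx01 : ∀ e, 0 ≤ x e ∧ x e ≤ 1 := hxbound.1
  have hxsumr : ∑ e, x e = rr := hxbound.2
  have hxsum : ∑ i ∈ t', w i • z i = x := by
    rw [← hcm', Finset.centerMass, hw1', inv_one, one_smul]
  set xx : ℝ := ∑ e, x e * x e with hxx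
  have hxxeq : xx = ∑ i ∈ t', w i * (∑ e, z i e * x e) := by
    calc xx = ∑ e, x e * x e := rfl
      _ = ∑ e, (∑ i ∈ t', w i * z i e) * x e := by
          refine Finset.sum_congr rfl fun e _ => ?_
          congr 1
          have heq := congrFun hxsum e
          rw [Finset.sum_apply] at heq
          simp only [Pi.smul_apply, smul_eq_mul] at heq
          exact heq.symm
      _ = ∑ e, ∑ i ∈ t', w i * z i e * x e := by
          refine Finset.sum_congr rfl fun e _ => ?_
          rw [Finset.sum_mul]
      _ = ∑ i ∈ t', ∑ e, w i * z i e * x e := Finset.sum_comm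
      _ = ∑ i ∈ t', w i * (∑ e, z i e * x e) := by
          refine Finset.sum_congr rfl fun i _ => ?_
          rw [Finset.mul_sum]
          refine Finset.sum_congr rfl fun e _ => ?_
          ring
  have hmax : ∃ i ∈ t', xx ≤ ∑ e, z i e * x e := by
    by_contra hno
    push_neg at hno
    have hlt : ∑ i ∈ t', w i * (∑ e, z i e * x e) < ∑ i ∈ t', w i * xx := by
      refine Finset.sum_lt_sum_of_nonempty ⟨i₀, hi₀⟩ fun i hi => ?_
      exact mul_lt_mul_of_pos_left (hno i hi) (hw0' i hi)
    rw [← Finset.sum_mul, hw1', one_mul] at hlt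
    linarith [hxxeq ▸ hlt]
  obtain ⟨is, his, hmaxval⟩ := hmax
  obtain ⟨Bs, hBs, hzs⟩ := hzS' is his
  have hBsF : chi Bs ∈ F := hzs ▸ habs is his
  refine ⟨Bs, hBs, hBsF, ?_⟩
  set T : E → ℝ := fun e => x e * (1 - x e) with hT
  have hl1 : ∑ e, |chi Bs e - x e| = rr + rr - 2 * (∑ e, chi Bs e * x e) := by
    have hterm : ∀ e, |chi Bs e - x e| = chi Bs e + x e - 2 * (chi Bs e * x e) := by
      intro e
      by_cases h : e ∈ Bs
      · rw [show chi Bs e = 1 by simp [chi, h]]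
        rw [abs_of_nonneg (by linarith [(hx01 e).2])]
        ring
      · rw [show chi Bs e = 0 by simp [chi, h]]
        rw [show (0:ℝ) - x e = -(x e) by ring, abs_neg, abs_of_nonneg (hx01 e).1]
        ring
    calc ∑ e, |chi Bs e - x e|
        = ∑ e, (chi Bs e + x e - 2 * (chi Bs e * x e)) :=
          Finset.sum_congr rfl fun e _ => hterm e
      _ = ((∑ e, chi Bs e) + (∑ e, x e)) - 2 * ∑ e, chi Bs e * x e := by
          rw [Finset.sum_sub_distrib, Finset.sum_add_distrib, Finset.mul_sum]
      _ = rr + rr - 2 * ∑ e, chi Bs e * x e := by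
          rw [sum_chi, hxsumr, hrr]
          norm_num
          exact_mod_cast congrArg Nat.cast (FinMatroid.base_card_eq hBs hB₀)
  have hinner : xx ≤ ∑ e, chi Bs e * x e := by
    rw [← hzs]; exact hmaxval
  have hTsum : rr - xx = ∑ e, T e := by
    calc rr - xx = (∑ e, x e) - (∑ e, x e * x e) := by rw [hxsumr]
      _ = ∑ e, (x e - x e * x e) := (Finset.sum_sub_distrib _ _).symm
      _ = ∑ e, T e := Finset.sum_congr rfl fun e _ => by rw [hT]; ring
  set NR := (Finset.univ : Finset E).filter (fun i => exRep F i ≠ i) with hNR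
  have hNRd : (NR.card : ℝ) ≤ (d : ℝ) := by
    have h := card_nonrep_le F
    rw [hd] at h
    exact_mod_cast h
  have hT14 : ∀ e, T e ≤ 1/4 := fun e => by
    rw [hT]; nlinarith [sq_nonneg (x e - 1/2)]
  have hT0 : ∀ e, 0 ≤ T e := fun e =>
    mul_nonneg (hx01 e).1 (by linarith [(hx01 e).2])
  have hchB₀F : chi B₀ ∈ F := hz₀ ▸ habs i₀ hi₀
  have hdiffs : ∀ i ∈ t', z i - chi B₀ ∈ dSpan F := by
    intro i hi
    obtain ⟨B, hB, hzB⟩ := hzS' i hi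
    rw [hzB]
    exact diff_mem_dSpan hFconv hFface _ B B₀ hB (hzB ▸ habs i hi) hB₀ hchB₀F rfl
  have hxdiff : x - chi B₀ ∈ dSpan F := by
    have hrepr : x - chi B₀ = ∑ i ∈ t', w i • (z i - chi B₀) := by
      symm
      calc ∑ i ∈ t', w i • (z i - chi B₀)
          = ∑ i ∈ t', (w i • z i - w i • chi B₀) :=
            Finset.sum_congr rfl fun i _ => smul_sub _ _ _
        _ = (∑ i ∈ t', w i • z i) - (∑ i ∈ t', w i • chi B₀) := Finset.sum_sub_distrib _ _
        _ = x - (∑ i ∈ t', w i) • chi B₀ := by rw [hxsum, Finset.sum_smul]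
        _ = x - chi B₀ := by rw [hw1', one_smul]
    rw [hrepr]
    exact Submodule.sum_smul_mem _ _ (fun i hi => hdiffs i hi)
  have hsmallzero : ∀ i : E, exRep F i = i → (∀ j, exRep F j = i → j = i) → T i = 0 := by
    intro i hrep hsmall
    have hker : ∀ y ∈ dSpan F, y i = 0 := by
      intro y hy
      have hle : dSpan F ≤ LinearMap.ker (LinearMap.proj (R := ℝ) (φ := fun _ : E => ℝ) i) := by
        apply Submodule.span_le.2
        rintro y' ⟨a, b, hab, hmemab, rfl⟩
        simp only [SetLike.mem_coe, LinearMap.mem_ker, LinearMap.proj_apply]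
        have hia : i ≠ a := by
          rintro rfl
          have hrel : exRel F i b := Or.inr ⟨hab, hmemab⟩
          have := exRep_eq_of_rel F hrel
          rw [hrep] at this
          exact hab (hsmall b this.symm).symm
        have hib : i ≠ b := by
          rintro rfl
          have hrel : exRel F i a := exRel_symm F (Or.inr ⟨hab, hmemab⟩)
          have := exRep_eq_of_rel F hrel
          rw [hrep] at this
          exact hab (hsmall a this.symm)
        simp [delta, hia, hib]
      exact LinearMap.mem_ker.1 (hle hy)
    have hxi : x i = chi B₀ i := by
      have h0 := hker _ hxdiff
      have h1 : x i - chi B₀ i = 0 := h0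
      linarith
    by_cases h : i ∈ B₀
    · rw [hT]
      simp only
      rw [hxi, show chi B₀ i = 1 by simp [chi, h]]
      ring
    · rw [hT]
      simp only
      rw [hxi, show chi B₀ i = 0 by simp [chi, h]]
      ring
  set q : E → Prop := fun i => ∃ j, exRep F j = i ∧ j ≠ i with hq
  set Reps := (Finset.univ : Finset E).filter (fun i => ¬ exRep F i ≠ i) with hReps
  set BigR := Reps.filter q with hBigR
  have hBigRcard : BigR.card ≤ NR.card := by
    apply Finset.card_le_card_of_injOn (fun i => if h : q i then h.choose else i)
    · intro i hi
      have hqi : q i := (Finset.mem_filter.1 hi).2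
      dsimp only
      rw [dif_pos hqi]
      obtain ⟨hrep, hne⟩ := hqi.choose_spec
      refine Finset.mem_filter.2 ⟨Finset.mem_univ _, ?_⟩
      rw [hrep]
      exact Ne.symm hne
    · intro i hi i' hi' heq
      have hqi : q i := (Finset.mem_filter.1 (Finset.mem_coe.1 hi)).2
      have hqi' : q i' := (Finset.mem_filter.1 (Finset.mem_coe.1 hi')).2
      dsimp only at heq
      rw [dif_pos hqi, dif_pos hqi'] at heq
      have h1 := hqi.choose_spec.1
      have h2 := hqi'.choose_spec.1
      rw [← h1, ← h2, heq]
  have hsplit : ∑ e, T e = ∑ e ∈ NR, T e + ∑ e ∈ Reps, T e := by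
    rw [hNR, hReps]
    exact (Finset.sum_filter_add_sum_filter_not _ _ _).symm
  have hsplit2 : ∑ e ∈ Reps, T e =
      ∑ e ∈ BigR, T e + ∑ e ∈ Reps.filter (fun i => ¬ q i), T e := by
    rw [hBigR]
    exact (Finset.sum_filter_add_sum_filter_not _ _ _).symm
  have hsmallsum : ∑ e ∈ Reps.filter (fun i => ¬ q i), T e = 0 := by
    apply Finset.sum_eq_zero
    intro i hi
    obtain ⟨hiR, hiq⟩ := Finset.mem_filter.1 hi
    have hrep : exRep F i = i := not_not.1 (Finset.mem_filter.1 hiR).2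
    apply hsmallzero i hrep
    intro j hj
    by_contra hji
    exact hiq ⟨j, hj, hji⟩
  have hNRsum : ∑ e ∈ NR, T e ≤ (NR.card : ℝ) * (1/4) := by
    have := Finset.sum_le_card_nsmul NR T (1/4) (fun e _ => hT14 e)
    rwa [nsmul_eq_mul] at this
  have hBigsum : ∑ e ∈ BigR, T e ≤ (NR.card : ℝ) * (1/4) := by
    have h1 := Finset.sum_le_card_nsmul BigR T (1/4) (fun e _ => hT14 e)
    rw [nsmul_eq_mul] at h1
    have h2 : (BigR.card : ℝ) ≤ (NR.card : ℝ) := by exact_mod_cast hBigRcard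
    nlinarith
  have hTtotal : ∑ e, T e ≤ (NR.card : ℝ) * (1/2) := by
    rw [hsplit, hsplit2, hsmallsum]
    linarith
  rw [hl1]
  linarith
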